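/- Let r > 0. The function f₁(s) = 1/( 2−2r+2s + 2·K_{n=1}^∞ (n²r²/(1−r+s)) ), defined for s > |r−1|, is the unique function tending to 0 at +∞ that satisfies f₁(s) + f₁(s+2r) = 1/(s+1) for all s > |r−1|; and the function f₂(s) = 1/( 2r−2+2s + 2·K_{n=1}^∞ (n²r²/(r−1+s)) ) is the unique function tending to 0 at +∞ that satisfies f₂(s) + f₂(s+2r) = 1/(s+2r−1) for all s > |r−1|. -/

import Mathlib

open Filter Real

/-- Numerators of the convergents of a generalized continued fraction with
integer part `b₀`, partial numerators `a n` and partial denominators `b n` (for `n ≥ 1`). -/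
noncomputable def cfNum (b₀ : ℝ) (a b : ℕ → ℝ) : ℕ → ℝ
  | 0 => b₀
  | 1 => b 1 * b₀ + a 1
  | n + 2 => b (n + 2) * cfNum b₀ a b (n + 1) + a (n + 2) * cfNum b₀ a b n

/-- Denominators of the convergents of a generalized continued fraction. -/
noncomputable def cfDen (a b : ℕ → ℝ) : ℕ → ℝ
  | 0 => 1
  | 1 => b 1
  | n + 2 => b (n + 2) * cfDen a b (n + 1) + a (n + 2) * cfDen a b n

/-- `IsCFLimit b₀ a b L` means: the convergents of the generalized continued fraction
`b₀ + a 1 / (b 1 + a 2 / (b 2 + ⋯))` tend to `L`. -/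
def IsCFLimit (b₀ : ℝ) (a b : ℕ → ℝ) (L : ℝ) : Prop :=
  Filter.Tendsto (fun n => cfNum b₀ a b n / cfDen a b n) Filter.atTop (nhds L)

open MeasureTheory Set

noncomputable def Ik (r t : ℝ) (k : ℕ) : ℝ :=
  ∫ x in Ioi (0:ℝ), exp (-(t*x)) * (sinh (r*x) ^ k / cosh (r*x) ^ (k+1))

section integrals
variable {r t : ℝ}

lemma g_nonneg {x : ℝ} (hr : 0 < r) (hx : 0 ≤ x) (k : ℕ) :
    0 ≤ sinh (r*x) ^ k / cosh (r*x) ^ (k+1) := by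
  apply div_nonneg
  · exact pow_nonneg (sinh_nonneg_iff.2 (by positivity)) k
  · positivity

lemma g_le_one {x : ℝ} (hr : 0 < r) (hx : 0 ≤ x) (k : ℕ) :
    sinh (r*x) ^ k / cosh (r*x) ^ (k+1) ≤ 1 := by
  rw [div_le_one (by positivity)]
  calc sinh (r*x) ^ k ≤ cosh (r*x) ^ k :=
        pow_le_pow_left₀ (sinh_nonneg_iff.2 (by positivity)) (sinh_lt_cosh _).le k
    _ ≤ cosh (r*x) ^ (k+1) := pow_le_pow_right₀ (one_le_cosh _) (by omega)

lemma Fk_cont (k : ℕ) :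
    Continuous (fun x => exp (-(t*x)) * (sinh (r*x) ^ k / cosh (r*x) ^ (k+1))) := by
  apply Continuous.mul (by continuity)
  apply Continuous.div (by continuity) (by continuity)
  intro x; positivity

lemma Fk_integrable (hr : 0 < r) (ht : 0 < t) (k : ℕ) :
    IntegrableOn (fun x => exp (-(t*x)) * (sinh (r*x) ^ k / cosh (r*x) ^ (k+1))) (Ioi (0:ℝ)) := by
  have hbase : IntegrableOn (fun x => exp (-(t*x))) (Ioi (0:ℝ)) :=
    (exp_neg_integrableOn_Ioi 0 ht).congr_fun (fun x _ => by ring_nf) measurableSet_Ioi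
  apply Integrable.mono' hbase (Fk_cont k).aestronglyMeasurable
  · filter_upwards [ae_restrict_mem measurableSet_Ioi] with x hx
    have hx' : (0:ℝ) ≤ x := le_of_lt hx
    rw [norm_mul, norm_of_nonneg (g_nonneg hr hx' k), norm_of_nonneg (exp_pos _).le]
    nth_rewrite 2 [← mul_one (exp _)]
    exact mul_le_mul_of_nonneg_left (g_le_one hr hx' k) (exp_pos _).le

lemma Ik_pos (hr : 0 < r) (ht : 0 < t) (k : ℕ) : 0 < Ik r t k := by
  rw [Ik, setIntegral_pos_iff_support_of_nonneg_ae]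
  · have hsub : Ioi (0:ℝ) ⊆ Function.support
        (fun x => exp (-(t*x)) * (sinh (r*x) ^ k / cosh (r*x) ^ (k+1))) := by
      intro x hx
      have hx' : 0 < r * x := by exact mul_pos hr hx
      have h1 : 0 < sinh (r*x) := by rwa [← sinh_zero, sinh_lt_sinh]
      have : 0 < exp (-(t*x)) * (sinh (r*x) ^ k / cosh (r*x) ^ (k+1)) := by positivity
      exact ne_of_gt this
    apply lt_of_lt_of_le _ (measure_mono (subset_inter hsub Subset.rfl))
    simp [Real.volume_Ioi]
  · filter_upwards [ae_restrict_mem measurableSet_Ioi] with x hx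
    exact mul_nonneg (exp_pos _).le (g_nonneg hr (le_of_lt hx) k)
  · exact Fk_integrable hr ht k

end integrals

section deriv
variable {r t : ℝ}

lemma hasDerivAt_exp_neg (t x : ℝ) :
    HasDerivAt (fun y => exp (-(t*y))) ((-t) * exp (-(t*x))) x := by
  have h1 : HasDerivAt (fun y : ℝ => -(t*y)) (-t) x := by
    have := ((hasDerivAt_id x).const_mul t).neg
    simp only [id_eq, mul_one] at this
    exact this
  simpa [mul_comm] using h1.exp

lemma hasDerivAt_sinh_rx (r x : ℝ) :
    HasDerivAt (fun y => sinh (r*y)) (cosh (r*x) * r) x := by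
  simpa using ((hasDerivAt_id x).const_mul r).sinh

lemma hasDerivAt_cosh_rx (r x : ℝ) :
    HasDerivAt (fun y => cosh (r*y)) (sinh (r*x) * r) x := by
  simpa using ((hasDerivAt_id x).const_mul r).cosh

lemma hasDerivAt_F0 (x : ℝ) :
    HasDerivAt (fun y => exp (-(t*y)) * (sinh (r*y)^0 / cosh (r*y)^(0+1)))
      ((-t) * (exp (-(t*x)) * (sinh (r*x)^0 / cosh (r*x)^(0+1)))
        + (-r) * (exp (-(t*x)) * (sinh (r*x)^1 / cosh (r*x)^(1+1)))) x := by
  have hc : cosh (r*x) ≠ 0 := (cosh_pos _).ne'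
  have hD : HasDerivAt (fun y => cosh (r*y)^(0+1)) 
      ((0+1 : ℕ) * cosh (r*x)^0 * (sinh (r*x) * r)) x := (hasDerivAt_cosh_rx r x).pow 1
  have hN := hasDerivAt_exp_neg t x
  have hdiv := hN.div hD (by positivity)
  have key : HasDerivAt (fun y => exp (-(t*y)) * (sinh (r*y)^0 / cosh (r*y)^(0+1)))
      (((-t) * exp (-(t*x)) * cosh (r*x)^(0+1) -
        exp (-(t*x)) * ((0+1 : ℕ) * cosh (r*x)^0 * (sinh (r*x) * r))) /
        (cosh (r*x)^(0+1))^2) x := by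
    apply hdiv.congr_of_eventuallyEq
    apply Filter.Eventually.of_forall
    intro y
    simp only [pow_zero, mul_one_div, Pi.div_apply]
  convert key using 1
  field_simp
  ring

lemma hasDerivAt_F (k : ℕ) (x : ℝ) :
    HasDerivAt (fun y => exp (-(t*y)) * (sinh (r*y)^(k+1) / cosh (r*y)^(k+2)))
      ((-t) * (exp (-(t*x)) * (sinh (r*x)^(k+1) / cosh (r*x)^(k+2)))
        + ((k+1) * r) * (exp (-(t*x)) * (sinh (r*x)^k / cosh (r*x)^(k+1)))
        + (-((k+2) * r)) * (exp (-(t*x)) * (sinh (r*x)^(k+2) / cosh (r*x)^(k+3)))) x := by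
  have hc : cosh (r*x) ≠ 0 := (cosh_pos _).ne'
  have hN : HasDerivAt (fun y => exp (-(t*y)) * sinh (r*y)^(k+1))
      ((-t) * exp (-(t*x)) * sinh (r*x)^(k+1)
        + exp (-(t*x)) * ((k+1 : ℕ) * sinh (r*x)^k * (cosh (r*x) * r))) x := by
    have := (hasDerivAt_exp_neg t x).mul ((hasDerivAt_sinh_rx r x).pow (k+1))
    refine this.congr_deriv ?_
    simp only [Nat.add_sub_cancel, Pi.pow_apply]
  have hD : HasDerivAt (fun y => cosh (r*y)^(k+2))
      ((k+2 : ℕ) * cosh (r*x)^(k+1) * (sinh (r*x) * r)) x := by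
    have := (hasDerivAt_cosh_rx r x).pow (k+2)
    refine this.congr_deriv ?_
    simp only [show k + 2 - 1 = k + 1 by omega]
  have hdiv := hN.div hD (by positivity)
  have key : HasDerivAt (fun y => exp (-(t*y)) * (sinh (r*y)^(k+1) / cosh (r*y)^(k+2)))
      ((((-t) * exp (-(t*x)) * sinh (r*x)^(k+1)
        + exp (-(t*x)) * ((k+1 : ℕ) * sinh (r*x)^k * (cosh (r*x) * r))) * cosh (r*x)^(k+2)
        - exp (-(t*x)) * sinh (r*x)^(k+1) * ((k+2 : ℕ) * cosh (r*x)^(k+1) * (sinh (r*x) * r))) /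
        (cosh (r*x)^(k+2))^2) x := by
    apply hdiv.congr_of_eventuallyEq
    apply Filter.Eventually.of_forall
    intro y
    simp only [Pi.div_apply, mul_div_assoc]
  convert key using 1
  field_simp
  push_cast
  ring
end deriv

section ftc
variable {r t : ℝ}

lemma Fk_tendsto (hr : 0 < r) (ht : 0 < t) (k : ℕ) :
    Tendsto (fun y => exp (-(t*y)) * (sinh (r*y)^k / cosh (r*y)^(k+1))) atTop (nhds 0) := by
  have h1 : Tendsto (fun y : ℝ => t*y) atTop atTop :=
    Tendsto.const_mul_atTop ht tendsto_id
  have hexp : Tendsto (fun y : ℝ => exp (-(t*y))) atTop (nhds 0) :=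
    Real.tendsto_exp_neg_atTop_nhds_zero.comp h1
  apply squeeze_zero_norm' _ hexp
  filter_upwards [Filter.eventually_ge_atTop (0:ℝ)] with y hy
  rw [norm_mul, norm_of_nonneg (g_nonneg hr hy k), norm_of_nonneg (exp_pos _).le]
  nth_rewrite 2 [← mul_one (exp _)]
  exact mul_le_mul_of_nonneg_left (g_le_one hr hy k) (exp_pos _).le

lemma Ik_eq (k : ℕ) : Ik r t k = ∫ x in Ioi (0:ℝ),
    exp (-(t*x)) * (sinh (r*x)^k / cosh (r*x)^(k+1)) := rfl

lemma Ik_rec0 (hr : 0 < r) (ht : 0 < t) : t * Ik r t 0 + r * Ik r t 1 = 1 := by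
  have hF0 := Fk_integrable hr ht 0 (r := r) (t := t)
  have hF1 := Fk_integrable hr ht 1 (r := r) (t := t)
  have hsum : ∫ x in Ioi (0:ℝ),
      ((-t) * (exp (-(t*x)) * (sinh (r*x)^0 / cosh (r*x)^(0+1)))
        + (-r) * (exp (-(t*x)) * (sinh (r*x)^1 / cosh (r*x)^(1+1))))
      = (-t) * Ik r t 0 + (-r) * Ik r t 1 := by
    rw [MeasureTheory.integral_add (hF0.const_mul _) (hF1.const_mul _),
      MeasureTheory.integral_const_mul, MeasureTheory.integral_const_mul, Ik_eq, Ik_eq]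
  have hftc := integral_Ioi_of_hasDerivAt_of_tendsto' (f := fun y =>
      exp (-(t*y)) * (sinh (r*y)^0 / cosh (r*y)^(0+1)))
    (fun x _ => hasDerivAt_F0 x) ((hF0.const_mul _).add (hF1.const_mul _)) (Fk_tendsto hr ht 0)
  rw [hsum] at hftc
  simp only [mul_zero, sinh_zero, cosh_zero, pow_zero, one_pow, exp_zero] at hftc
  norm_num at hftc
  linarith

lemma Ik_rec (hr : 0 < r) (ht : 0 < t) (k : ℕ) :
    t * Ik r t (k+1) + ((k:ℝ)+2) * r * Ik r t (k+2) = ((k:ℝ)+1) * r * Ik r t k := by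
  have hF0 := Fk_integrable hr ht k (r := r) (t := t)
  have hF1 := Fk_integrable hr ht (k+1) (r := r) (t := t)
  have hF2 := Fk_integrable hr ht (k+2) (r := r) (t := t)
  have h1 : ∫ x in Ioi (0:ℝ),
      ((-t) * (exp (-(t*x)) * (sinh (r*x)^(k+1) / cosh (r*x)^(k+2)))
        + (((k:ℝ)+1) * r) * (exp (-(t*x)) * (sinh (r*x)^k / cosh (r*x)^(k+1))))
      = (-t) * Ik r t (k+1) + (((k:ℝ)+1) * r) * Ik r t k := by
    rw [MeasureTheory.integral_add (hF1.const_mul _) (hF0.const_mul _),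
      MeasureTheory.integral_const_mul, MeasureTheory.integral_const_mul, Ik_eq, Ik_eq]
  have hsum : ∫ x in Ioi (0:ℝ),
      ((-t) * (exp (-(t*x)) * (sinh (r*x)^(k+1) / cosh (r*x)^(k+2)))
        + (((k:ℝ)+1) * r) * (exp (-(t*x)) * (sinh (r*x)^k / cosh (r*x)^(k+1)))
        + (-(((k:ℝ)+2) * r)) * (exp (-(t*x)) * (sinh (r*x)^(k+2) / cosh (r*x)^(k+3))))
      = ((-t) * Ik r t (k+1) + (((k:ℝ)+1) * r) * Ik r t k)
        + (-(((k:ℝ)+2) * r)) * Ik r t (k+2) := by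
    have hAB : IntegrableOn (fun x =>
        (-t) * (exp (-(t*x)) * (sinh (r*x)^(k+1) / cosh (r*x)^(k+2)))
          + (((k:ℝ)+1) * r) * (exp (-(t*x)) * (sinh (r*x)^k / cosh (r*x)^(k+1)))) (Ioi (0:ℝ)) :=
      (hF1.const_mul _).add (hF0.const_mul _)
    rw [MeasureTheory.integral_add hAB (hF2.const_mul _),
      h1, MeasureTheory.integral_const_mul]
    simp only [← Ik_eq]
  have hder : ∀ x ∈ Ici (0:ℝ), HasDerivAt (fun y =>
      exp (-(t*y)) * (sinh (r*y)^(k+1) / cosh (r*y)^(k+2)))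
      ((-t) * (exp (-(t*x)) * (sinh (r*x)^(k+1) / cosh (r*x)^(k+2)))
        + (((k:ℝ)+1) * r) * (exp (-(t*x)) * (sinh (r*x)^k / cosh (r*x)^(k+1)))
        + (-(((k:ℝ)+2) * r)) * (exp (-(t*x)) * (sinh (r*x)^(k+2) / cosh (r*x)^(k+3)))) x := by
    intro x _
    have := hasDerivAt_F (r := r) (t := t) k x
    convert this using 2 <;> push_cast <;> ring
  have hftc := integral_Ioi_of_hasDerivAt_of_tendsto' hder
    (((hF1.const_mul _).add (hF0.const_mul _)).add (hF2.const_mul _)) (Fk_tendsto hr ht (k+1))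
  rw [hsum] at hftc
  simp only [mul_zero, sinh_zero, cosh_zero, exp_zero, zero_pow (Nat.succ_ne_zero k),
    zero_div, mul_one, one_mul, one_pow] at hftc
  norm_num at hftc
  linarith

end ftc

section funceq
variable {r t : ℝ}

lemma integral_exp_neg_mul (ht : 0 < t) : ∫ x in Ioi (0:ℝ), exp (-(t*x)) = 1/t := by
  have hder : ∀ x ∈ Ici (0:ℝ), HasDerivAt (fun y => -(1/t) * exp (-(t*y))) (exp (-(t*x))) x := by
    intro x _
    have := (hasDerivAt_exp_neg t x).const_mul (-(1/t))
    exact this.congr_deriv (by rw [← mul_assoc]; simp [ht.ne'])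
  have hint : IntegrableOn (fun x => exp (-(t*x))) (Ioi (0:ℝ)) :=
    (exp_neg_integrableOn_Ioi 0 ht).congr_fun (fun x _ => by ring_nf) measurableSet_Ioi
  have htend : Tendsto (fun y : ℝ => -(1/t) * exp (-(t*y))) atTop (nhds 0) := by
    have h1 : Tendsto (fun y : ℝ => t*y) atTop atTop :=
      Tendsto.const_mul_atTop ht tendsto_id
    have hexp : Tendsto (fun y : ℝ => exp (-(t*y))) atTop (nhds 0) :=
      Real.tendsto_exp_neg_atTop_nhds_zero.comp h1
    simpa using hexp.const_mul (-(1/t))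
  have := integral_Ioi_of_hasDerivAt_of_tendsto' hder hint htend
  rw [this]
  simp

lemma Ik0_le (hr : 0 < r) (ht : 0 < t) : Ik r t 0 ≤ 1/t := by
  rw [Ik_eq, ← integral_exp_neg_mul ht]
  apply setIntegral_mono_on (Fk_integrable hr ht 0)
    ((exp_neg_integrableOn_Ioi 0 ht).congr_fun (fun x _ => by ring_nf) measurableSet_Ioi)
    measurableSet_Ioi
  intro x hx
  nth_rewrite 2 [← mul_one (exp _)]
  exact mul_le_mul_of_nonneg_left (g_le_one hr (le_of_lt hx) 0) (exp_pos _).le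

lemma Ik0_add (hr : 0 < r) (ht : 0 < t) :
    Ik r t 0 + Ik r (t + 2*r) 0 = 2 / (t + r) := by
  have ht2 : 0 < t + 2*r := by linarith
  have htr : 0 < t + r := by linarith
  rw [Ik_eq, Ik_eq, ← MeasureTheory.integral_add (Fk_integrable hr ht 0) (Fk_integrable hr ht2 0)]
  have heq : ∀ x ∈ Ioi (0:ℝ),
      exp (-(t*x)) * (sinh (r*x)^0 / cosh (r*x)^(0+1))
        + exp (-((t+2*r)*x)) * (sinh (r*x)^0 / cosh (r*x)^(0+1))
      = 2 * exp (-((t+r)*x)) := by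
    intro x _
    have hc : cosh (r*x) ≠ 0 := (cosh_pos _).ne'
    rw [pow_zero, zero_add, pow_one]
    rw [Real.cosh_eq]
    field_simp
    rw [add_mul, ← Real.exp_add, ← Real.exp_add]
    ring_nf
  rw [MeasureTheory.setIntegral_congr_fun measurableSet_Ioi heq,
    MeasureTheory.integral_const_mul, integral_exp_neg_mul htr]
  ring

end funceq

noncomputable def tau (r t : ℝ) (n : ℕ) : ℝ := ((n:ℝ)+1) * r * Ik r t (n+1) / Ik r t n

section cf
variable {r t : ℝ}

lemma tau_pos (hr : 0 < r) (ht : 0 < t) (n : ℕ) : 0 < tau r t n := by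
  have h1 := Ik_pos hr ht (n+1)
  have h0 := Ik_pos hr ht n
  have : (0:ℝ) < (n:ℝ)+1 := by positivity
  exact div_pos (mul_pos (mul_pos this hr) h1) h0

lemma tau_rec (hr : 0 < r) (ht : 0 < t) (n : ℕ) :
    tau r t n * (t + tau r t (n+1)) = ((n:ℝ)+1)^2 * r^2 := by
  have h := Ik_rec hr ht n
  have h0 := (Ik_pos hr ht n).ne'
  have h1 := (Ik_pos hr ht (n+1)).ne'
  have e1 : t + tau r t (n+1) = (((n:ℝ)+1)*r* Ik r t n) / Ik r t (n+1) := by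
    rw [tau]; push_cast; field_simp; linarith
  rw [e1, tau]
  field_simp

lemma cfDen_pos (hr : 0 < r) (ht : 0 < t) :
    ∀ n, 0 < cfDen (fun n => (n:ℝ)^2 * r^2) (fun _ => t) n := by
  have H : ∀ n, 0 < cfDen (fun n => (n:ℝ)^2 * r^2) (fun _ => t) n ∧
      0 < cfDen (fun n => (n:ℝ)^2 * r^2) (fun _ => t) (n+1) := by
    intro n
    induction n with
    | zero => exact ⟨by simp [cfDen], by simpa [cfDen] using ht⟩
    | succ n ih =>
      refine ⟨ih.2, ?_⟩
      show 0 < t * cfDen _ _ (n+1) + ((n+2:ℕ):ℝ)^2 * r^2 * cfDen _ _ n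
      have : (0:ℝ) < ((n+2:ℕ):ℝ)^2 * r^2 := by positivity
      nlinarith [ih.1, ih.2]
  exact fun n => (H n).1

lemma cf_invariant (hr : 0 < r) (ht : 0 < t) :
    ∀ n, (r * Ik r t 1 / Ik r t 0) *
        (cfDen (fun n => (n:ℝ)^2 * r^2) (fun _ => t) (n+1)
          + tau r t (n+1) * cfDen (fun n => (n:ℝ)^2 * r^2) (fun _ => t) n)
      = cfNum 0 (fun n => (n:ℝ)^2 * r^2) (fun _ => t) (n+1)
          + tau r t (n+1) * cfNum 0 (fun n => (n:ℝ)^2 * r^2) (fun _ => t) n := by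
  intro n
  induction n with
  | zero =>
    have hL : r * Ik r t 1 / Ik r t 0 = tau r t 0 := by
      rw [tau]; norm_num
    have h := tau_rec hr ht 0
    norm_num at h
    show (r * Ik r t 1 / Ik r t 0) * (t + tau r t 1 * 1) = t * 0 + ((1:ℕ):ℝ)^2 * r^2 + tau r t 1 * 0
    rw [hL]
    push_cast
    linarith [h]
  | succ n ih =>
    have hq2 : cfDen (fun n => (n:ℝ)^2 * r^2) (fun _ => t) (n+2)
        = t * cfDen (fun n => (n:ℝ)^2 * r^2) (fun _ => t) (n+1)
          + ((n:ℝ)+2)^2 * r^2 * cfDen (fun n => (n:ℝ)^2 * r^2) (fun _ => t) n := by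
      show t * cfDen _ _ (n+1) + ((n+2:ℕ):ℝ)^2 * r^2 * cfDen _ _ n = _
      push_cast; ring
    have hp2 : cfNum 0 (fun n => (n:ℝ)^2 * r^2) (fun _ => t) (n+2)
        = t * cfNum 0 (fun n => (n:ℝ)^2 * r^2) (fun _ => t) (n+1)
          + ((n:ℝ)+2)^2 * r^2 * cfNum 0 (fun n => (n:ℝ)^2 * r^2) (fun _ => t) n := by
      show t * cfNum 0 _ _ (n+1) + ((n+2:ℕ):ℝ)^2 * r^2 * cfNum 0 _ _ n = _
      push_cast; ring
    have htr := tau_rec hr ht (n+1)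
    push_cast at htr
    rw [hq2, hp2]
    set q0 := cfDen (fun n => (n:ℝ)^2 * r^2) (fun _ => t) n
    set q1 := cfDen (fun n => (n:ℝ)^2 * r^2) (fun _ => t) (n+1)
    set p0 := cfNum 0 (fun n => (n:ℝ)^2 * r^2) (fun _ => t) n
    set p1 := cfNum 0 (fun n => (n:ℝ)^2 * r^2) (fun _ => t) (n+1)
    set L := r * Ik r t 1 / Ik r t 0
    -- goal: L*((t*q1 + (n+2)^2 r^2 q0) + tau(n+2)*q1) = (t*p1 + (n+2)^2 r^2 p0) + tau(n+2)*p1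
    have expand : (t * q1 + ((n:ℝ)+2)^2*r^2 * q0) + tau r t (n+2) * q1
        = (t + tau r t (n+2)) * (q1 + tau r t (n+1) * q0) := by
      have : ((n:ℝ)+2)^2*r^2 = tau r t (n+1) * (t + tau r t (n+2)) := by linarith [htr]
      rw [this]; ring
    have expand2 : (t * p1 + ((n:ℝ)+2)^2*r^2 * p0) + tau r t (n+2) * p1
        = (t + tau r t (n+2)) * (p1 + tau r t (n+1) * p0) := by
      have : ((n:ℝ)+2)^2*r^2 = tau r t (n+1) * (t + tau r t (n+2)) := by linarith [htr]
      rw [this]; ring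
    rw [expand, expand2, ← mul_assoc, mul_comm L (t + tau r t (n+2)), mul_assoc, ih]

end cf

section value
variable {r t : ℝ}

lemma cf_value (hr : 0 < r) (ht : 0 < t) {K : ℝ}
    (hK : IsCFLimit 0 (fun n => (n:ℝ)^2 * r^2) (fun _ => t) K) :
    K = r * Ik r t 1 / Ik r t 0 := by
  set p := cfNum 0 (fun n => (n:ℝ)^2 * r^2) (fun _ => t) with hp
  set q := cfDen (fun n => (n:ℝ)^2 * r^2) (fun _ => t) with hq
  set L := r * Ik r t 1 / Ik r t 0 with hL
  have hqpos := cfDen_pos hr ht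
  have hbound : ∀ n, |L - p (n+1) / q (n+1)| ≤ |p n / q n - p (n+1) / q (n+1)| := by
    intro n
    have hq0 := hqpos n
    have hq1 := hqpos (n+1)
    have hτ := tau_pos hr ht (n+1)
    have hden : 0 < q (n+1) + tau r t (n+1) * q n := by positivity
    have hinv := cf_invariant hr ht n
    have hfrac : L - p (n+1) / q (n+1)
        = (p n / q n - p (n+1) / q (n+1))
          * (tau r t (n+1) * q n / (q (n+1) + tau r t (n+1) * q n)) := by
      have hLval : L = (p (n+1) + tau r t (n+1) * p n) / (q (n+1) + tau r t (n+1) * q n) := by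
        rw [eq_div_iff hden.ne']
        exact hinv
      rw [hLval]
      rw [div_sub_div _ _ hden.ne' hq1.ne', div_sub_div _ _ hq0.ne' hq1.ne',
        div_mul_div_comm]
      rw [div_eq_div_iff (by positivity) (by positivity)]
      ring
    rw [hfrac, abs_mul]
    have hfactor : |tau r t (n+1) * q n / (q (n+1) + tau r t (n+1) * q n)| ≤ 1 := by
      rw [abs_of_nonneg (by positivity), div_le_one hden]
      linarith
    calc |p n / q n - p (n+1) / q (n+1)| * |tau r t (n+1) * q n / (q (n+1) + tau r t (n+1) * q n)|
        ≤ |p n / q n - p (n+1) / q (n+1)| * 1 :=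
          mul_le_mul_of_nonneg_left hfactor (abs_nonneg _)
      _ = |p n / q n - p (n+1) / q (n+1)| := mul_one _
  have hc : Tendsto (fun n => p n / q n) atTop (nhds K) := hK
  have hc1 : Tendsto (fun n => p (n+1) / q (n+1)) atTop (nhds K) :=
    hc.comp (tendsto_add_atTop_nat 1)
  have hdiff : Tendsto (fun n => |p n / q n - p (n+1) / q (n+1)|) atTop (nhds 0) := by
    have := (hc.sub hc1).abs
    simpa using this
  have habs : Tendsto (fun n => |L - p (n+1) / q (n+1)|) atTop (nhds 0) :=
    squeeze_zero (fun n => abs_nonneg _) hbound hdiff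
  have hlim : Tendsto (fun n => p (n+1) / q (n+1)) atTop (nhds L) := by
    rw [tendsto_iff_dist_tendsto_zero]
    simpa [Real.dist_eq, abs_sub_comm] using habs
  exact tendsto_nhds_unique hc1 hlim

lemma cf_half_inv (hr : 0 < r) (ht : 0 < t) {K : ℝ}
    (hK : IsCFLimit 0 (fun n => (n:ℝ)^2 * r^2) (fun _ => t) K) :
    1 / (2*t + 2*K) = Ik r t 0 / 2 := by
  have hKL := cf_value hr ht hK
  have h0 := Ik_pos hr ht 0
  have h1 := Ik_pos hr ht 1
  have hrec := Ik_rec0 hr ht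
  rw [hKL]
  have hden : 2*t + 2*(r * Ik r t 1 / Ik r t 0) = 2 / Ik r t 0 := by
    field_simp
    linarith
  rw [hden, one_div_div]

end value

lemma branch (r c : ℝ) (hr : 0 < r) (K : ℝ → ℝ)
    (hpos : ∀ s : ℝ, |r - 1| < s → 0 < c + s)
    (hK : ∀ s : ℝ, |r - 1| < s →
      IsCFLimit 0 (fun n => (n:ℝ)^2 * r^2) (fun _ => c + s) (K s)) :
    (∀ s : ℝ, |r - 1| < s →
      1/(2*(c+s) + 2*K s) + 1/(2*(c+(s+2*r)) + 2*K (s+2*r)) = 1/((c+s)+r)) ∧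
    Tendsto (fun s => 1/(2*(c+s) + 2*K s)) atTop (nhds 0) ∧
    (∀ f : ℝ → ℝ, (∀ s : ℝ, |r - 1| < s → f s + f (s+2*r) = 1/((c+s)+r)) →
      Tendsto f atTop (nhds 0) →
      ∀ s : ℝ, |r - 1| < s → f s = 1/(2*(c+s) + 2*K s)) := by
  have habs : ∀ s : ℝ, |r - 1| < s → |r - 1| < s + 2*r := fun s hs => by linarith
  have hval : ∀ s : ℝ, |r - 1| < s → 1/(2*(c+s) + 2*K s) = Ik r (c+s) 0 / 2 :=
    fun s hs => cf_half_inv hr (hpos s hs) (hK s hs)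
  have hfeq : ∀ s : ℝ, |r - 1| < s →
      1/(2*(c+s) + 2*K s) + 1/(2*(c+(s+2*r)) + 2*K (s+2*r)) = 1/((c+s)+r) := by
    intro s hs
    rw [hval s hs, hval _ (habs s hs)]
    have harg : c + (s + 2*r) = (c+s) + 2*r := by ring
    rw [harg]
    have hadd := Ik0_add hr (hpos s hs)
    have hx : (0:ℝ) < (c+s) + r := by linarith [hpos s hs]
    have hadd' : (Ik r (c+s) 0 + Ik r (c+s+2*r) 0) * ((c+s)+r) = 2 := by
      rw [hadd]; field_simp
    rw [div_add_div _ _ (two_ne_zero) (two_ne_zero), div_eq_div_iff (by norm_num) hx.ne']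
    linear_combination 2 * hadd'
  have htend : Tendsto (fun s => 1/(2*(c+s) + 2*K s)) atTop (nhds 0) := by
    have hup : Tendsto (fun s : ℝ => 1/(2*(c+s))) atTop (nhds 0) := by
      have h1 : Tendsto (fun s : ℝ => 2*(c+s)) atTop atTop :=
        (tendsto_atTop_add_const_left atTop c tendsto_id).const_mul_atTop two_pos
      have h2 : Tendsto (fun s : ℝ => (2*(c+s))⁻¹) atTop (nhds 0) := h1.inv_tendsto_atTop
      simpa [one_div] using h2
    apply tendsto_of_tendsto_of_tendsto_of_le_of_le' tendsto_const_nhds hup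
    · filter_upwards [eventually_gt_atTop (|r - 1|)] with s hs
      rw [hval s hs]
      have := Ik_pos hr (hpos s hs) 0
      positivity
    · filter_upwards [eventually_gt_atTop (|r - 1|)] with s hs
      rw [hval s hs]
      have hle := Ik0_le hr (hpos s hs)
      have hcs := hpos s hs
      rw [div_le_div_iff₀ two_pos (by positivity)]
      calc Ik r (c+s) 0 * (2*(c+s)) ≤ (1/(c+s)) * (2*(c+s)) := by
            apply mul_le_mul_of_nonneg_right hle (by positivity)
        _ = 2 := by field_simp
        _ = 1 * 2 := by ring
  refine ⟨hfeq, htend, ?_⟩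
  intro f hf hf0 s hs
  set g : ℝ → ℝ := fun s => 1/(2*(c+s) + 2*K s) with hg
  have hd : Tendsto (fun σ => f σ - g σ) atTop (nhds 0) := by
    simpa using hf0.sub htend
  have hmono : Tendsto (fun n : ℕ => s + 2*r*(n:ℝ)) atTop atTop := by
    apply tendsto_atTop_add_const_left
    exact Tendsto.const_mul_atTop (by linarith) tendsto_natCast_atTop_atTop
  have hseq : Tendsto (fun n : ℕ => f (s + 2*r*(n:ℝ)) - g (s + 2*r*(n:ℝ))) atTop (nhds 0) :=
    hd.comp hmono
  have hconst : ∀ n : ℕ, |f (s + 2*r*(n:ℝ)) - g (s + 2*r*(n:ℝ))| = |f s - g s| := by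
    intro n
    induction n with
    | zero => norm_num
    | succ n ih =>
      have h2rn : (0:ℝ) ≤ 2*r*(n:ℝ) := by positivity
      have hsn : |r - 1| < s + 2*r*(n:ℝ) := by linarith
      have h1 := hf _ hsn
      have h2 := hfeq _ hsn
      have hflip : f (s + 2*r*(n:ℝ) + 2*r) - g (s + 2*r*(n:ℝ) + 2*r)
          = -(f (s + 2*r*(n:ℝ)) - g (s + 2*r*(n:ℝ))) := by
        have hgs : g (s + 2*r*(n:ℝ)) + g (s + 2*r*(n:ℝ) + 2*r) = 1/((c+(s + 2*r*(n:ℝ)))+r) := by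
          exact h2
        linarith
      have harg : s + 2*r*((n:ℝ)+1) = s + 2*r*(n:ℝ) + 2*r := by ring
      rw [show ((n+1:ℕ):ℝ) = (n:ℝ)+1 by push_cast; ring, harg, hflip, abs_neg, ih]
  have h1 : Tendsto (fun n : ℕ => |f (s + 2*r*(n:ℝ)) - g (s + 2*r*(n:ℝ))|) atTop (nhds 0) := by
    simpa using hseq.abs
  rw [funext hconst] at h1
  have h0 : (0:ℝ) = |f s - g s| := tendsto_nhds_unique h1 tendsto_const_nhds
  have := abs_eq_zero.1 h0.symm
  have := sub_eq_zero.1 this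
  exact this

theorem cf_functional_equations_f1_f2 (r : ℝ) (hr : 0 < r) (K₁ K₂ : ℝ → ℝ)
    (hK₁ : ∀ s : ℝ, |r - 1| < s →
      IsCFLimit 0 (fun n => (n : ℝ) ^ 2 * r ^ 2) (fun _ => 1 - r + s) (K₁ s))
    (hK₂ : ∀ s : ℝ, |r - 1| < s →
      IsCFLimit 0 (fun n => (n : ℝ) ^ 2 * r ^ 2) (fun _ => r - 1 + s) (K₂ s)) :
    ((∀ s : ℝ, |r - 1| < s →
        1 / (2 - 2*r + 2*s + 2 * K₁ s) +
          1 / (2 - 2*r + 2*(s + 2*r) + 2 * K₁ (s + 2*r)) = 1 / (s + 1)) ∧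
      Tendsto (fun s : ℝ => 1 / (2 - 2*r + 2*s + 2 * K₁ s)) atTop (nhds 0) ∧
      ∀ f : ℝ → ℝ, (∀ s : ℝ, |r - 1| < s → f s + f (s + 2*r) = 1 / (s + 1)) →
        Tendsto f atTop (nhds 0) →
        ∀ s : ℝ, |r - 1| < s → f s = 1 / (2 - 2*r + 2*s + 2 * K₁ s)) ∧
    ((∀ s : ℝ, |r - 1| < s →
        1 / (2*r - 2 + 2*s + 2 * K₂ s) +
          1 / (2*r - 2 + 2*(s + 2*r) + 2 * K₂ (s + 2*r)) = 1 / (s + 2*r - 1)) ∧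
      Tendsto (fun s : ℝ => 1 / (2*r - 2 + 2*s + 2 * K₂ s)) atTop (nhds 0) ∧
      ∀ f : ℝ → ℝ, (∀ s : ℝ, |r - 1| < s → f s + f (s + 2*r) = 1 / (s + 2*r - 1)) →
        Tendsto f atTop (nhds 0) →
        ∀ s : ℝ, |r - 1| < s → f s = 1 / (2*r - 2 + 2*s + 2 * K₂ s)) := by
  have hpos₁ : ∀ s : ℝ, |r - 1| < s → 0 < (1 - r) + s := by
    intro s hs; have := le_abs_self (r - 1); linarith
  have hpos₂ : ∀ s : ℝ, |r - 1| < s → 0 < (r - 1) + s := by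
    intro s hs; have := neg_le_abs (r - 1); linarith
  obtain ⟨B1a, B1b, B1c⟩ := branch r (1 - r) hr K₁ hpos₁ hK₁
  obtain ⟨B2a, B2b, B2c⟩ := branch r (r - 1) hr K₂ hpos₂ hK₂
  have e₁ : ∀ s : ℝ, 2 - 2*r + 2*s + 2 * K₁ s = 2*((1 - r)+s) + 2*K₁ s := fun s => by ring
  have e₂ : ∀ s : ℝ, 2*r - 2 + 2*s + 2 * K₂ s = 2*((r - 1)+s) + 2*K₂ s := fun s => by ring
  refine ⟨⟨?_, ?_, ?_⟩, ?_, ?_, ?_⟩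
  · intro s hs
    rw [e₁ s, show 2 - 2*r + 2*(s + 2*r) + 2 * K₁ (s + 2*r)
        = 2*((1 - r)+(s+2*r)) + 2*K₁ (s+2*r) by ring,
      show s + 1 = ((1 - r)+s)+r by ring]
    exact B1a s hs
  · have : (fun s : ℝ => 1 / (2 - 2*r + 2*s + 2 * K₁ s))
        = fun s : ℝ => 1 / (2*((1 - r)+s) + 2*K₁ s) := by
      funext s; rw [e₁ s]
    rw [this]; exact B1b
  · intro f hf hf0 s hs
    rw [e₁ s]
    refine B1c f ?_ hf0 s hs
    intro σ hσ
    rw [show ((1 - r)+σ)+r = σ + 1 by ring]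
    exact hf σ hσ
  · intro s hs
    rw [e₂ s, show 2*r - 2 + 2*(s + 2*r) + 2 * K₂ (s + 2*r)
        = 2*((r - 1)+(s+2*r)) + 2*K₂ (s+2*r) by ring,
      show s + 2*r - 1 = ((r - 1)+s)+r by ring]
    exact B2a s hs
  · have : (fun s : ℝ => 1 / (2*r - 2 + 2*s + 2 * K₂ s))
        = fun s : ℝ => 1 / (2*((r - 1)+s) + 2*K₂ s) := by
      funext s; rw [e₂ s]
    rw [this]; exact B2b
  · intro f hf hf0 s hs
    rw [e₂ s]
    refine B2c f ?_ hf0 s hs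
    intro σ hσ
    rw [show ((r - 1)+σ)+r = σ + 2*r - 1 by ring]
    exact hf σ hσ
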